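/- arXiv:2502.12810 — 2 statements merged into one kernel-verified Lean document; each statement's English description precedes it below -/
import Mathlib

section
/- (Complex orthogonal Procrustes problem.) Let A, B ∈ ℂ^{n×m}, set M = B·Aᴴ ∈ ℂ^{n×n}, and suppose M = U·Σ·Vᴴ where U, V ∈ ℂ^{n×n} are unitary and Σ is a diagonal matrix with nonnegative real diagonal entries. Then the unitary matrix Ω₀ = U·Vᴴ solves the Procrustes problem: for every unitary matrix Ω ∈ ℂ^{n×n}, ‖Ω₀·A − B‖_F ≤ ‖Ω·A − B‖_F. -/
/-- Frobenius norm of a complex matrix: `√(∑ i j, ‖X i j‖²)`. -/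
noncomputable def frobNorm {n m : ℕ} (X : Matrix (Fin n) (Fin m) ℂ) : ℝ :=
  Real.sqrt (∑ i : Fin n, ∑ j : Fin m, ‖X i j‖ ^ 2)

open Matrix in
private lemma procrustes_sumSq {n m : ℕ} (X : Matrix (Fin n) (Fin m) ℂ) :
    (∑ i, ∑ j, ‖X i j‖^2) = (Matrix.trace (X.conjTranspose * X)).re := by
  rw [Matrix.trace]
  simp only [Matrix.diag, Matrix.mul_apply, Matrix.conjTranspose_apply, Complex.re_sum]
  rw [Finset.sum_comm]
  congr 1; ext i; congr 1; ext j
  rw [Complex.star_def, ← Complex.normSq_eq_conj_mul_self, Complex.normSq_eq_norm_sq]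
  simp [← Complex.ofReal_pow]

open Matrix in
private lemma procrustes_expand {n m : ℕ} (A B : Matrix (Fin n) (Fin m) ℂ)
    (Ω : Matrix (Fin n) (Fin n) ℂ) (hΩ : Ω.conjTranspose * Ω = 1) :
    (Matrix.trace ((Ω*A - B).conjTranspose * (Ω*A - B))).re
      = (Matrix.trace (A.conjTranspose*A)).re + (Matrix.trace (B.conjTranspose*B)).re
        - 2 * (Matrix.trace (B*A.conjTranspose*Ω.conjTranspose)).re := by
  have e1 : (Ω*A - B).conjTranspose * (Ω*A - B)
      = A.conjTranspose*A - A.conjTranspose*Ω.conjTranspose*B - B.conjTranspose*(Ω*A)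
        + B.conjTranspose*B := by
    rw [conjTranspose_sub, conjTranspose_mul, Matrix.sub_mul, Matrix.mul_sub, Matrix.mul_sub]
    have h : A.conjTranspose * Ω.conjTranspose * (Ω * A) = A.conjTranspose * A := by
      rw [Matrix.mul_assoc, ← Matrix.mul_assoc Ω.conjTranspose, hΩ, Matrix.one_mul]
    rw [h]
    abel
  rw [e1]
  have e2 : Matrix.trace (A.conjTranspose*Ω.conjTranspose*B)
      = Matrix.trace (B*A.conjTranspose*Ω.conjTranspose) := by
    rw [Matrix.trace_mul_cycle]
  have e3 : Matrix.trace (B.conjTranspose*(Ω*A))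
      = star (Matrix.trace (B*A.conjTranspose*Ω.conjTranspose)) := by
    rw [← Matrix.trace_conjTranspose]
    have h : (B*A.conjTranspose*Ω.conjTranspose).conjTranspose = Ω * A * B.conjTranspose := by
      simp [conjTranspose_mul, Matrix.mul_assoc]
    rw [h, Matrix.trace_mul_cycle]
    rw [Matrix.mul_assoc]
  rw [Matrix.trace_add, Matrix.trace_sub, Matrix.trace_sub, e2, e3]
  simp only [Complex.add_re, Complex.sub_re]
  rw [show (star (Matrix.trace (B*A.conjTranspose*Ω.conjTranspose))).re
    = (Matrix.trace (B*A.conjTranspose*Ω.conjTranspose)).re from Complex.conj_re _]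
  ring

open Matrix in
private lemma procrustes_entry_le {n : ℕ} (W : Matrix (Fin n) (Fin n) ℂ)
    (hW : W ∈ Matrix.unitaryGroup (Fin n) ℂ) (i : Fin n) : ‖W i i‖ ≤ 1 := by
  have h : W * W.conjTranspose = 1 := by
    rw [← Matrix.star_eq_conjTranspose]
    exact hW.2
  have h2 : ∑ j, Complex.normSq (W i j) = 1 := by
    have h1 := congrArg (fun M => M i i) h
    simp only [Matrix.mul_apply, Matrix.one_apply_eq, Matrix.conjTranspose_apply] at h1
    have e : ∀ j, W i j * star (W i j) = (Complex.normSq (W i j) : ℂ) := by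
      intro j; rw [Complex.star_def, Complex.mul_conj]
    rw [Finset.sum_congr rfl (fun j _ => e j)] at h1
    exact_mod_cast h1
  have h3 : Complex.normSq (W i i) ≤ 1 := by
    rw [← h2]
    exact Finset.single_le_sum (fun j _ => Complex.normSq_nonneg _) (Finset.mem_univ i)
  rw [← Real.sqrt_one, Complex.norm_def]
  exact Real.sqrt_le_sqrt h3

open Matrix in
/-- **Complex orthogonal Procrustes problem.**
Let `M = B Aᴴ` with SVD `M = U Σ Vᴴ` (`U, V` unitary, `Σ = diagonal σ`, `σ i ≥ 0`).
Then `Ω₀ = U Vᴴ` minimizes `‖Ω A − B‖_F` over all unitary `Ω`. -/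
theorem complex_orthogonal_procrustes (n m : ℕ)
    (A B : Matrix (Fin n) (Fin m) ℂ)
    (U V : Matrix (Fin n) (Fin n) ℂ) (σ : Fin n → ℝ)
    (hσ : ∀ i, 0 ≤ σ i)
    (hU : U ∈ Matrix.unitaryGroup (Fin n) ℂ)
    (hV : V ∈ Matrix.unitaryGroup (Fin n) ℂ)
    (hM : B * A.conjTranspose =
      U * Matrix.diagonal (fun i => (σ i : ℂ)) * V.conjTranspose) :
    ∀ Ω : Matrix (Fin n) (Fin n) ℂ, Ω ∈ Matrix.unitaryGroup (Fin n) ℂ →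
      frobNorm ((U * V.conjTranspose) * A - B) ≤ frobNorm (Ω * A - B) := by
  intro Ω hΩ
  -- basic unitarity facts
  have hUs : U.conjTranspose * U = 1 := by
    rw [← Matrix.star_eq_conjTranspose]; exact hU.1
  have hVs : V.conjTranspose * V = 1 := by
    rw [← Matrix.star_eq_conjTranspose]; exact hV.1
  have hΩs : Ω.conjTranspose * Ω = 1 := by
    rw [← Matrix.star_eq_conjTranspose]; exact hΩ.1
  have hΩ0 : (U * V.conjTranspose) ∈ Matrix.unitaryGroup (Fin n) ℂ := by
    have : V.conjTranspose ∈ Matrix.unitaryGroup (Fin n) ℂ := by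
      rw [← Matrix.star_eq_conjTranspose]; exact Unitary.star_mem hV
    exact mul_mem hU this
  have hΩ0s : (U * V.conjTranspose).conjTranspose * (U * V.conjTranspose) = 1 := by
    rw [← Matrix.star_eq_conjTranspose]; exact hΩ0.1
  -- the trace term for Ω₀ is exactly ∑ σ
  have key1 : (Matrix.trace (B * A.conjTranspose * (U * V.conjTranspose).conjTranspose)).re
      = ∑ i, σ i := by
    have e : B * A.conjTranspose * (U * V.conjTranspose).conjTranspose
        = U * Matrix.diagonal (fun i => (σ i : ℂ)) * U.conjTranspose := by
      rw [hM, conjTranspose_mul, conjTranspose_conjTranspose]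
      rw [Matrix.mul_assoc, ← Matrix.mul_assoc V.conjTranspose, hVs, Matrix.one_mul]
    rw [e, Matrix.trace_mul_cycle, hUs, Matrix.one_mul, Matrix.trace_diagonal]
    simp [Complex.re_sum]
  -- the trace term for Ω is at most ∑ σ
  have key2 : (Matrix.trace (B * A.conjTranspose * Ω.conjTranspose)).re ≤ ∑ i, σ i := by
    set W : Matrix (Fin n) (Fin n) ℂ := V.conjTranspose * Ω.conjTranspose * U with hWdef
    have hWmem : W ∈ Matrix.unitaryGroup (Fin n) ℂ := by
      rw [hWdef, ← Matrix.star_eq_conjTranspose V, ← Matrix.star_eq_conjTranspose Ω]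
      exact mul_mem (mul_mem (Unitary.star_mem hV) (Unitary.star_mem hΩ)) hU
    have e : Matrix.trace (B * A.conjTranspose * Ω.conjTranspose)
        = ∑ i, (σ i : ℂ) * W i i := by
      rw [hM]
      rw [show U * Matrix.diagonal (fun i => (σ i : ℂ)) * V.conjTranspose * Ω.conjTranspose
          = U * (Matrix.diagonal (fun i => (σ i : ℂ)) * (V.conjTranspose * Ω.conjTranspose))
          from by rw [Matrix.mul_assoc, Matrix.mul_assoc]]
      rw [Matrix.trace_mul_comm, Matrix.mul_assoc,
        ← hWdef, Matrix.trace]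
      simp [Matrix.diag, Matrix.diagonal_mul]
    rw [e, Complex.re_sum]
    apply Finset.sum_le_sum
    intro i _
    rw [show ((σ i : ℂ) * W i i).re = σ i * (W i i).re from by
      simp [Complex.mul_re]]
    calc σ i * (W i i).re ≤ σ i * 1 := by
          apply mul_le_mul_of_nonneg_left _ (hσ i)
          exact le_trans (Complex.re_le_norm _) (procrustes_entry_le W hWmem i)
      _ = σ i := mul_one _
  -- conclude
  unfold frobNorm
  apply Real.sqrt_le_sqrt
  rw [procrustes_sumSq, procrustes_sumSq, procrustes_expand A B _ hΩ0s,
    procrustes_expand A B Ω hΩs, key1]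
  linarith [key2]
end

section
/- (Real orthogonal Procrustes problem.) Let A, B ∈ ℝ^{n×m}, set M = B·Aᵀ ∈ ℝ^{n×n}, and suppose M = U·Σ·Vᵀ where U, V ∈ ℝ^{n×n} are orthogonal matrices and Σ is a diagonal matrix with nonnegative diagonal entries. Then the orthogonal matrix Ω₀ = U·Vᵀ solves the Procrustes problem: for every orthogonal matrix Ω ∈ ℝ^{n×n}, ‖Ω₀·A − B‖_F ≤ ‖Ω·A − B‖_F. -/
open Matrix Finset

/-- Frobenius norm of a real matrix: `√(∑ i j, (X i j)²)`. -/
noncomputable def frobNormReal {n m : ℕ} (X : Matrix (Fin n) (Fin m) ℝ) : ℝ :=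
  Real.sqrt (∑ i : Fin n, ∑ j : Fin m, (X i j) ^ 2)

lemma sum_mul_eq_trace {n m : ℕ} (X Y : Matrix (Fin n) (Fin m) ℝ) :
    ∑ i, ∑ j, X i j * Y i j = Matrix.trace (X * Yᵀ) := by
  simp [Matrix.trace, Matrix.mul_apply, Matrix.diag]

lemma orth_diag_le_one {n : ℕ} (Z : Matrix (Fin n) (Fin n) ℝ)
    (hZ : Z * Zᵀ = 1) (i : Fin n) : Z i i ≤ 1 := by
  have h : ∑ j, Z i j * Z i j = 1 := by
    have := congrFun (congrFun hZ i) i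
    simpa [Matrix.mul_apply, Matrix.one_apply] using this
  have h2 : Z i i * Z i i ≤ 1 := by
    rw [← h]
    exact Finset.single_le_sum (fun j _ => mul_self_nonneg (Z i j)) (Finset.mem_univ i)
  nlinarith

/-- Expansion of the Procrustes objective for an orthogonal `Ω`. -/
lemma procrustes_expand_s8 {n m : ℕ}
    (A B : Matrix (Fin n) (Fin m) ℝ)
    (U V : Matrix (Fin n) (Fin n) ℝ) (σ : Fin n → ℝ)
    (hM : B * Aᵀ = U * Matrix.diagonal σ * Vᵀ)
    (Ω : Matrix (Fin n) (Fin n) ℝ) (hΩ : Ωᵀ * Ω = 1) :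
    ∑ i, ∑ j, ((Ω * A - B) i j) ^ 2 =
      (∑ i, ∑ j, (A i j) ^ 2) + (∑ i, ∑ j, (B i j) ^ 2)
        - 2 * ∑ i, (Uᵀ * Ω * V) i i * σ i := by
  have expand : ∑ i, ∑ j, ((Ω * A - B) i j) ^ 2 =
      (∑ i, ∑ j, ((Ω * A) i j) * ((Ω * A) i j))
        - 2 * (∑ i, ∑ j, ((Ω * A) i j) * (B i j))
        + ∑ i, ∑ j, (B i j) ^ 2 := by
    have key : ∀ i j, ((Ω * A - B) i j) ^ 2 =
        ((Ω * A) i j) * ((Ω * A) i j) - 2 * (((Ω * A) i j) * (B i j)) + (B i j) ^ 2 := by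
      intro i j; simp [Matrix.sub_apply]; ring
    simp_rw [key, Finset.sum_add_distrib, Finset.sum_sub_distrib, ← Finset.mul_sum]
  have hsq : ∑ i, ∑ j, ((Ω * A) i j) * ((Ω * A) i j) = ∑ i, ∑ j, (A i j) ^ 2 := by
    rw [sum_mul_eq_trace]
    have : (Ω * A) * (Ω * A)ᵀ = Ω * (A * Aᵀ) * Ωᵀ := by
      rw [Matrix.transpose_mul]; simp [Matrix.mul_assoc]
    rw [this, Matrix.trace_mul_comm, ← mul_assoc, hΩ, one_mul, ← sum_mul_eq_trace]
    refine Finset.sum_congr rfl fun i _ => Finset.sum_congr rfl fun j _ => ?_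
    ring
  have hcross : ∑ i, ∑ j, ((Ω * A) i j) * (B i j) = ∑ i, (Uᵀ * Ω * V) i i * σ i := by
    rw [sum_mul_eq_trace]
    have h1 : (Ω * A) * Bᵀ = Ω * (B * Aᵀ)ᵀ := by
      rw [Matrix.transpose_mul, Matrix.transpose_transpose, Matrix.mul_assoc]
    rw [h1, hM]
    have h2 : Ω * (U * Matrix.diagonal σ * Vᵀ)ᵀ = (Ω * V) * (Matrix.diagonal σ * Uᵀ) := by
      simp [Matrix.transpose_mul, Matrix.diagonal_transpose, mul_assoc]
    rw [h2, Matrix.trace_mul_comm, mul_assoc, ← mul_assoc Uᵀ]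
    simp [Matrix.trace, Matrix.diag, Matrix.mul_diagonal]
    exact Finset.sum_congr rfl fun i _ => mul_comm _ _
  rw [expand, hsq, hcross]; ring

/-- **Real orthogonal Procrustes problem.**
Let `M = B Aᵀ` with SVD `M = U Σ Vᵀ` (`U, V` orthogonal, `Σ = diagonal σ`, `σ i ≥ 0`).
Then `Ω₀ = U Vᵀ` minimizes `‖Ω A − B‖_F` over all orthogonal `Ω`. -/
theorem real_orthogonal_procrustes (n m : ℕ)
    (A B : Matrix (Fin n) (Fin m) ℝ)
    (U V : Matrix (Fin n) (Fin n) ℝ) (σ : Fin n → ℝ)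
    (hσ : ∀ i, 0 ≤ σ i)
    (hU : U ∈ Matrix.orthogonalGroup (Fin n) ℝ)
    (hV : V ∈ Matrix.orthogonalGroup (Fin n) ℝ)
    (hM : B * A.transpose = U * Matrix.diagonal σ * V.transpose) :
    ∀ Ω : Matrix (Fin n) (Fin n) ℝ, Ω ∈ Matrix.orthogonalGroup (Fin n) ℝ →
      frobNormReal ((U * V.transpose) * A - B) ≤ frobNormReal (Ω * A - B) := by
  intro Ω hΩ
  rw [Matrix.mem_orthogonalGroup_iff'] at hU hV hΩ
  have hU' : Uᵀ * U = 1 := by simpa [Matrix.star_eq_conjTranspose] using hU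
  have hV' : Vᵀ * V = 1 := by simpa [Matrix.star_eq_conjTranspose] using hV
  have hΩ' : Ωᵀ * Ω = 1 := by simpa [Matrix.star_eq_conjTranspose] using hΩ
  have hU'' : U * Uᵀ = 1 := mul_eq_one_comm.mp hU'
  have hV'' : V * Vᵀ = 1 := mul_eq_one_comm.mp hV'
  have hΩ'' : Ω * Ωᵀ = 1 := mul_eq_one_comm.mp hΩ'
  have hΩ₀ : (U * Vᵀ)ᵀ * (U * Vᵀ) = 1 := by
    rw [Matrix.transpose_mul, Matrix.transpose_transpose]
    calc Vᵀᵀ * Uᵀ * (U * Vᵀ) = V * (Uᵀ * U) * Vᵀ := by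
          rw [Matrix.transpose_transpose]; simp [Matrix.mul_assoc]
      _ = 1 := by rw [hU', mul_one, hV'']
  unfold frobNormReal
  apply Real.sqrt_le_sqrt
  rw [procrustes_expand_s8 A B U V σ hM Ω hΩ', procrustes_expand_s8 A B U V σ hM (U * Vᵀ) hΩ₀]
  have hZid : Uᵀ * (U * Vᵀ) * V = 1 := by
    calc Uᵀ * (U * Vᵀ) * V = (Uᵀ * U) * (Vᵀ * V) := by simp [Matrix.mul_assoc]
      _ = 1 := by rw [hU', hV', mul_one]
  rw [hZid]
  have hZorth : (Uᵀ * Ω * V) * (Uᵀ * Ω * V)ᵀ = 1 := by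
    simp only [Matrix.transpose_mul, Matrix.transpose_transpose]
    calc Uᵀ * Ω * V * (Vᵀ * (Ωᵀ * U)) = Uᵀ * (Ω * (V * Vᵀ) * Ωᵀ) * U := by
          simp [Matrix.mul_assoc]
      _ = 1 := by rw [hV'', mul_one, hΩ'', mul_one, hU']
  have hle : ∑ i, (Uᵀ * Ω * V) i i * σ i ≤ ∑ i, (1 : Matrix (Fin n) (Fin n) ℝ) i i * σ i := by
    refine Finset.sum_le_sum fun i _ => ?_
    have := orth_diag_le_one _ hZorth i
    simp only [Matrix.one_apply_eq]
    nlinarith [hσ i]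
  linarith
end
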